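/- Let p ≥ 2 and q ≥ 2 with q odd. The group Sh(p,2q,2) = ⟨ s, t | s^p = t^2 = e, (st)^q = (ts)^q ⟩ is isomorphic to the semidirect product Sh(p,q,p) ⋊ ℤ/2ℤ, where Sh(p,q,p) = ⟨ σ, τ | σ^p = τ^p = e, prod(σ,τ;q) = prod(τ,σ;q) ⟩ and the generator of ℤ/2ℤ acts by swapping σ and τ. Consequently, the subgroup of Sh(p,2q,2) generated by s and tst has index 2 and is isomorphic to Sh(p,q,p). -/
import Mathlib

/-- `prodWord a b m` is the alternating product `abab…` with `m` letters. -/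
def prodWord {M : Type*} [Monoid M] (a b : M) (m : ℕ) : M := (a * b) ^ (m / 2) * a ^ (m % 2)

/-- Relators of the dihedral Shephard group `Sh(p,q,r)`. -/
def shRels (p q r : ℕ) : Set (FreeGroup Bool) :=
  { FreeGroup.of true ^ p, FreeGroup.of false ^ r,
    prodWord (FreeGroup.of true) (FreeGroup.of false) q *
      (prodWord (FreeGroup.of false) (FreeGroup.of true) q)⁻¹ }

/-- The dihedral Shephard group `Sh(p,q,r) = ⟨s,t ∣ s^p = t^r = 1, prod(s,t;q) = prod(t,s;q)⟩`. -/
abbrev Sh (p q r : ℕ) : Type := PresentedGroup (shRels p q r)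

/-- The generator `s` (of order dividing `p`) of `Sh(p,q,r)`. -/
def shS (p q r : ℕ) : Sh p q r := PresentedGroup.of true

/-- The generator `t` (of order dividing `r`) of `Sh(p,q,r)`. -/
def shT (p q r : ℕ) : Sh p q r := PresentedGroup.of false

namespace ShAux

section General
variable {G H : Type*} [Group G] [Group H]

lemma map_prodWord (f : G →* H) (a b : G) (m : ℕ) :
    f (prodWord a b m) = prodWord (f a) (f b) m := by
  simp [prodWord, map_mul, map_pow]

lemma prodWord_even (a b : G) (n : ℕ) : prodWord a b (2 * n) = (a * b) ^ n := by
  have h1 : 2 * n / 2 = n := by omega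
  have h2 : 2 * n % 2 = 0 := by omega
  simp [prodWord, h1, h2]

lemma prodWord_odd (a b : G) (k : ℕ) : prodWord a b (2 * k + 1) = (a * b) ^ k * a := by
  have h1 : (2 * k + 1) / 2 = k := by omega
  have h2 : (2 * k + 1) % 2 = 1 := by omega
  simp [prodWord, h1, h2]

lemma key1 (a b : G) (hb : b * b = 1) (k : ℕ) :
    prodWord a (b * a * b) (2 * k + 1) = (a * b) ^ (2 * k + 1) * b := by
  rw [prodWord_odd]
  have h : a * (b * a * b) = (a * b) * (a * b) := by group
  rw [h, ← sq, ← pow_mul]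
  conv_rhs => rw [pow_succ, mul_assoc, mul_assoc, hb, mul_one]

lemma key2 (a b : G) (k : ℕ) :
    prodWord (b * a * b) a (2 * k + 1) = (b * a) ^ (2 * k + 1) * b := by
  rw [prodWord_odd]
  have h : (b * a * b) * a = (b * a) * (b * a) := by group
  rw [h, ← sq, ← pow_mul, pow_succ, mul_assoc]
  group

lemma key3 (a b : G) (hb : b * b = 1) (n : ℕ) : (b * a * b) ^ n = b * a ^ n * b := by
  have hbi : b⁻¹ = b := inv_eq_iff_mul_eq_one.mpr hb
  calc (b * a * b) ^ n = (b * a * b⁻¹) ^ n := by rw [hbi]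
  _ = b * a ^ n * b⁻¹ := conj_pow
  _ = b * a ^ n * b := by rw [hbi]

lemma zmod2_pow_mod (t : G) (ht : t * t = 1) (n : ℕ) : t ^ n = t ^ (n % 2) := by
  conv_lhs => rw [← Nat.div_add_mod n 2]
  rw [pow_add, pow_mul, sq, ht, one_pow, one_mul]

/-- Homomorphism from `ℤ/2ℤ` (multiplicative) determined by an element of square one. -/
def zmod2Hom (t : G) (ht : t * t = 1) : Multiplicative (ZMod 2) →* G where
  toFun x := t ^ (Multiplicative.toAdd x).val
  map_one' := by
    show t ^ (ZMod.val (0 : ZMod 2)) = 1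
    simp
  map_mul' x y := by
    show t ^ (Multiplicative.toAdd x + Multiplicative.toAdd y).val = _
    rw [ZMod.val_add, ← zmod2_pow_mod t ht, pow_add]

@[simp] lemma zmod2Hom_apply (t : G) (ht : t * t = 1) :
    zmod2Hom t ht (Multiplicative.ofAdd 1) = t := by
  show t ^ (ZMod.val (1 : ZMod 2)) = t
  rw [show ZMod.val (1 : ZMod 2) = 1 from rfl, pow_one]

end General

section SD
variable {N G : Type*} [Group N] [Group G] {φ : G →* MulAut N}

open SemidirectProduct

lemma inr_mul_inl (g : G) (n : N) : (inr g : N ⋊[φ] G) * inl n = inl (φ g n) * inr g := by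
  rw [inl_aut]
  simp [mul_assoc, ← map_mul]

lemma sd_sq (g : G) (hg : g * g = 1) (n : N) :
    ((inl n : N ⋊[φ] G) * inr g) * (inl n * inr g) = inl (n * φ g n) := by
  rw [← mk_eq_inl_mul_inr, mul_def]
  ext <;> simp [hg]

lemma sd_pow (g : G) (hg : g * g = 1) (n : N) (k : ℕ) :
    ((inl n : N ⋊[φ] G) * inr g) ^ (2 * k + 1) = inl ((n * φ g n) ^ k * n) * inr g := by
  set X := (inl n : N ⋊[φ] G) * inr g with hX
  have h2 : X ^ 2 = inl (n * φ g n) := by rw [sq]; exact sd_sq g hg n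
  calc X ^ (2 * k + 1) = (X ^ 2) ^ k * X := by rw [← pow_mul, ← pow_succ]
  _ = inl ((n * φ g n) ^ k) * (inl n * inr g) := by rw [h2, ← map_pow]
  _ = inl ((n * φ g n) ^ k * n) * inr g := by rw [← mul_assoc, ← map_mul]

end SD

section ShLemmas

lemma mem_rels1 (p q r : ℕ) : FreeGroup.of true ^ p ∈ shRels p q r := by
  left; rfl

lemma mem_rels2 (p q r : ℕ) : FreeGroup.of false ^ r ∈ shRels p q r := by
  right; left; rfl

lemma mem_rels3 (p q r : ℕ) :
    prodWord (FreeGroup.of true) (FreeGroup.of false) q *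
      (prodWord (FreeGroup.of false) (FreeGroup.of true) q)⁻¹ ∈ shRels p q r := by
  right; right; rfl

lemma sh_rel_one {p q r : ℕ} {x : FreeGroup Bool} (hx : x ∈ shRels p q r) :
    PresentedGroup.mk (shRels p q r) x = 1 :=
  (QuotientGroup.eq_one_iff _).mpr (Subgroup.subset_normalClosure hx)

lemma shS_pow (p q r : ℕ) : shS p q r ^ p = 1 := by
  have h := sh_rel_one (mem_rels1 p q r)
  rwa [map_pow] at h

lemma shT_pow (p q r : ℕ) : shT p q r ^ r = 1 := by
  have h := sh_rel_one (mem_rels2 p q r)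
  rwa [map_pow] at h

lemma sh_braid (p q r : ℕ) :
    prodWord (shS p q r) (shT p q r) q = prodWord (shT p q r) (shS p q r) q := by
  have h := sh_rel_one (mem_rels3 p q r)
  rw [map_mul, map_inv, mul_inv_eq_one, map_prodWord, map_prodWord] at h
  exact h

end ShLemmas

section Swap
variable (p q : ℕ)

lemma swap_lift_rels :
    ∀ r ∈ shRels p q p,
      FreeGroup.lift (fun b => (PresentedGroup.of (!b) : Sh p q p)) r = 1 := by
  intro x hx
  rcases hx with rfl | rfl | rfl
  · rw [map_pow, FreeGroup.lift_apply_of]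
    exact shT_pow p q p
  · rw [map_pow, FreeGroup.lift_apply_of]
    exact shS_pow p q p
  · rw [map_mul, map_inv, mul_inv_eq_one, map_prodWord, map_prodWord,
      FreeGroup.lift_apply_of, FreeGroup.lift_apply_of]
    exact (sh_braid p q p).symm

/-- The swap `σ ↔ τ` as an endomorphism of `Sh p q p`. -/
def swapHom : Sh p q p →* Sh p q p := PresentedGroup.toGroup (swap_lift_rels p q)

@[simp] lemma swapHom_of (x : Bool) :
    swapHom p q (PresentedGroup.of x) = PresentedGroup.of (!x) :=
  PresentedGroup.toGroup.of _

lemma swapHom_invol : (swapHom p q).comp (swapHom p q) = MonoidHom.id _ := by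
  ext x
  simp

/-- The swap `σ ↔ τ` as an automorphism of `Sh p q p`. -/
def swapAut : MulAut (Sh p q p) :=
  MonoidHom.toMulEquiv (swapHom p q) (swapHom p q) (swapHom_invol p q) (swapHom_invol p q)

lemma swapAut_sq : swapAut p q * swapAut p q = 1 := by
  ext x
  show swapHom p q (swapHom p q x) = x
  exact DFunLike.congr_fun (swapHom_invol p q) x

/-- The action of `ℤ/2ℤ` on `Sh p q p` swapping the generators. -/
def theta : Multiplicative (ZMod 2) →* MulAut (Sh p q p) :=
  zmod2Hom (swapAut p q) (swapAut_sq p q)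

lemma theta_u : theta p q (Multiplicative.ofAdd 1) = swapAut p q := zmod2Hom_apply _ _

@[simp] lemma theta_S : theta p q (Multiplicative.ofAdd 1) (shS p q p) = shT p q p := by
  rw [theta_u]
  show swapHom p q (PresentedGroup.of true) = _
  simp [shT]

@[simp] lemma theta_T : theta p q (Multiplicative.ofAdd 1) (shT p q p) = shS p q p := by
  rw [theta_u]
  show swapHom p q (PresentedGroup.of false) = _
  simp [shS]

end Swap

end ShAux

theorem dihedral_shephard_odd_index_two (p q : ℕ) (hp : 2 ≤ p) (hq : 2 ≤ q) (hodd : Odd q) :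
    (∃ (θ : Multiplicative (ZMod 2) →* MulAut (Sh p q p))
        (e : (Sh p q p) ⋊[θ] Multiplicative (ZMod 2) ≃* Sh p (2 * q) 2),
      (θ (Multiplicative.ofAdd 1)) (shS p q p) = shT p q p ∧
      (θ (Multiplicative.ofAdd 1)) (shT p q p) = shS p q p ∧
      e (SemidirectProduct.inl (shS p q p)) = shS p (2 * q) 2 ∧
      e (SemidirectProduct.inl (shT p q p))
          = shT p (2 * q) 2 * shS p (2 * q) 2 * shT p (2 * q) 2 ∧
      e (SemidirectProduct.inr (Multiplicative.ofAdd 1)) = shT p (2 * q) 2) ∧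
    (Subgroup.closure
        {shS p (2 * q) 2, shT p (2 * q) 2 * shS p (2 * q) 2 * shT p (2 * q) 2}).index = 2 ∧
    Nonempty (↥(Subgroup.closure
        {shS p (2 * q) 2, shT p (2 * q) 2 * shS p (2 * q) 2 * shT p (2 * q) 2})
      ≃* Sh p q p) := by
  classical
  obtain ⟨k, rfl⟩ := hodd
  -- abbreviations
  have hT2 : shT p (2 * (2 * k + 1)) 2 * shT p (2 * (2 * k + 1)) 2 = 1 := by
    rw [← sq]; exact ShAux.shT_pow p (2 * (2 * k + 1)) 2
  have hTinv : (shT p (2 * (2 * k + 1)) 2)⁻¹ = shT p (2 * (2 * k + 1)) 2 :=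
    inv_eq_iff_mul_eq_one.mpr hT2
  have hS : shS p (2 * (2 * k + 1)) 2 ^ p = 1 := ShAux.shS_pow p (2 * (2 * k + 1)) 2
  have hBr : (shS p (2 * (2 * k + 1)) 2 * shT p (2 * (2 * k + 1)) 2) ^ (2 * k + 1)
      = (shT p (2 * (2 * k + 1)) 2 * shS p (2 * (2 * k + 1)) 2) ^ (2 * k + 1) := by
    have h := ShAux.sh_braid p (2 * (2 * k + 1)) 2
    rwa [ShAux.prodWord_even, ShAux.prodWord_even] at h
  have hbrodd : (shS p (2 * k + 1) p * shT p (2 * k + 1) p) ^ k * shS p (2 * k + 1) p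
      = (shT p (2 * k + 1) p * shS p (2 * k + 1) p) ^ k * shT p (2 * k + 1) p := by
    have h := ShAux.sh_braid p (2 * k + 1) p
    rwa [ShAux.prodWord_odd, ShAux.prodWord_odd] at h
  have hu2 : (Multiplicative.ofAdd (1 : ZMod 2)) * (Multiplicative.ofAdd (1 : ZMod 2)) = 1 := by
    decide
  have hcases : ∀ g : Multiplicative (ZMod 2), g = 1 ∨ g = Multiplicative.ofAdd 1 := by decide
  -- the homomorphism f₁ : Sh p q p →* Sh p 2q 2, σ ↦ s, τ ↦ tst
  have hrels₁ : ∀ r ∈ shRels p (2 * k + 1) p,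
      FreeGroup.lift (fun b => bif b then shS p (2 * (2 * k + 1)) 2
        else shT p (2 * (2 * k + 1)) 2 * shS p (2 * (2 * k + 1)) 2 * shT p (2 * (2 * k + 1)) 2)
        r = 1 := by
    intro x hx
    rcases hx with rfl | rfl | rfl
    · rw [map_pow, FreeGroup.lift_apply_of]
      exact hS
    · rw [map_pow, FreeGroup.lift_apply_of]
      show (shT p (2 * (2 * k + 1)) 2 * shS p (2 * (2 * k + 1)) 2
        * shT p (2 * (2 * k + 1)) 2) ^ p = 1
      rw [ShAux.key3 _ _ hT2, hS, mul_one, hT2]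
    · rw [map_mul, map_inv, mul_inv_eq_one, ShAux.map_prodWord, ShAux.map_prodWord,
        FreeGroup.lift_apply_of, FreeGroup.lift_apply_of]
      show prodWord (shS p (2 * (2 * k + 1)) 2)
          (shT p (2 * (2 * k + 1)) 2 * shS p (2 * (2 * k + 1)) 2 * shT p (2 * (2 * k + 1)) 2)
          (2 * k + 1)
        = prodWord (shT p (2 * (2 * k + 1)) 2 * shS p (2 * (2 * k + 1)) 2
            * shT p (2 * (2 * k + 1)) 2) (shS p (2 * (2 * k + 1)) 2) (2 * k + 1)
      rw [ShAux.key1 _ _ hT2, ShAux.key2, hBr]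
  let f₁ : Sh p (2 * k + 1) p →* Sh p (2 * (2 * k + 1)) 2 := PresentedGroup.toGroup hrels₁
  let f₂ : Multiplicative (ZMod 2) →* Sh p (2 * (2 * k + 1)) 2 := ShAux.zmod2Hom _ hT2
  have hf₁σ : f₁ (shS p (2 * k + 1) p) = shS p (2 * (2 * k + 1)) 2 :=
    PresentedGroup.toGroup.of hrels₁
  have hf₁τ : f₁ (shT p (2 * k + 1) p) = shT p (2 * (2 * k + 1)) 2 * shS p (2 * (2 * k + 1)) 2
      * shT p (2 * (2 * k + 1)) 2 := PresentedGroup.toGroup.of hrels₁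
  have hf₂u : f₂ (Multiplicative.ofAdd 1) = shT p (2 * (2 * k + 1)) 2 :=
    ShAux.zmod2Hom_apply _ hT2
  have hθS := ShAux.theta_S p (2 * k + 1)
  have hθT := ShAux.theta_T p (2 * k + 1)
  -- compatibility
  have compat : ∀ g : Multiplicative (ZMod 2),
      f₁.comp ((ShAux.theta p (2 * k + 1)) g).toMonoidHom
        = (MulAut.conj (f₂ g)).toMonoidHom.comp f₁ := by
    intro g
    rcases hcases g with rfl | rfl
    · refine MonoidHom.ext fun x => ?_
      simp
    · refine PresentedGroup.ext fun x => ?_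
      cases x
      · show f₁ ((ShAux.theta p (2 * k + 1)) (Multiplicative.ofAdd 1) (shT p (2 * k + 1) p))
          = MulAut.conj (f₂ (Multiplicative.ofAdd 1)) (f₁ (shT p (2 * k + 1) p))
        rw [hθT, hf₁σ, hf₂u, hf₁τ, MulAut.conj_apply, hTinv]
        rw [show shT p (2 * (2 * k + 1)) 2 * (shT p (2 * (2 * k + 1)) 2
            * shS p (2 * (2 * k + 1)) 2 * shT p (2 * (2 * k + 1)) 2) * shT p (2 * (2 * k + 1)) 2
          = (shT p (2 * (2 * k + 1)) 2 * shT p (2 * (2 * k + 1)) 2) * shS p (2 * (2 * k + 1)) 2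
            * (shT p (2 * (2 * k + 1)) 2 * shT p (2 * (2 * k + 1)) 2) by group, hT2, one_mul,
          mul_one]
      · show f₁ ((ShAux.theta p (2 * k + 1)) (Multiplicative.ofAdd 1) (shS p (2 * k + 1) p))
          = MulAut.conj (f₂ (Multiplicative.ofAdd 1)) (f₁ (shS p (2 * k + 1) p))
        rw [hθS, hf₁τ, hf₂u, hf₁σ, MulAut.conj_apply, hTinv]
  let φ := SemidirectProduct.lift f₁ f₂ compat
  -- the homomorphism ψ : Sh p 2q 2 →* Sh p q p ⋊ ℤ/2
  have hrels₂ : ∀ r ∈ shRels p (2 * (2 * k + 1)) 2,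
      FreeGroup.lift (fun b => bif b
        then (SemidirectProduct.inl (shS p (2 * k + 1) p) :
          Sh p (2 * k + 1) p ⋊[ShAux.theta p (2 * k + 1)] Multiplicative (ZMod 2))
        else SemidirectProduct.inr (Multiplicative.ofAdd 1)) r = 1 := by
    intro x hx
    rcases hx with rfl | rfl | rfl
    · rw [map_pow, FreeGroup.lift_apply_of]
      show SemidirectProduct.inl (shS p (2 * k + 1) p) ^ p = 1
      rw [← map_pow, ShAux.shS_pow, map_one]
    · rw [map_pow, FreeGroup.lift_apply_of]
      show SemidirectProduct.inr (G := Multiplicative (ZMod 2)) (Multiplicative.ofAdd 1) ^ 2 = 1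
      rw [← map_pow, sq, hu2, map_one]
    · rw [map_mul, map_inv, mul_inv_eq_one, ShAux.map_prodWord, ShAux.map_prodWord,
        FreeGroup.lift_apply_of, FreeGroup.lift_apply_of]
      show prodWord (SemidirectProduct.inl (shS p (2 * k + 1) p))
          (SemidirectProduct.inr (Multiplicative.ofAdd 1)) (2 * (2 * k + 1))
        = prodWord (SemidirectProduct.inr (Multiplicative.ofAdd 1))
          (SemidirectProduct.inl (shS p (2 * k + 1) p)) (2 * (2 * k + 1))
      rw [ShAux.prodWord_even, ShAux.prodWord_even, ShAux.inr_mul_inl, hθS,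
        ShAux.sd_pow _ hu2, ShAux.sd_pow _ hu2, hθS, hθT, hbrodd]
  let ψ : Sh p (2 * (2 * k + 1)) 2 →*
      (Sh p (2 * k + 1) p ⋊[ShAux.theta p (2 * k + 1)] Multiplicative (ZMod 2)) :=
    PresentedGroup.toGroup hrels₂
  have hψS : ψ (shS p (2 * (2 * k + 1)) 2) = SemidirectProduct.inl (shS p (2 * k + 1) p) :=
    PresentedGroup.toGroup.of hrels₂
  have hψT : ψ (shT p (2 * (2 * k + 1)) 2) = SemidirectProduct.inr (Multiplicative.ofAdd 1) :=
    PresentedGroup.toGroup.of hrels₂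
  -- the two compositions are the identity
  have h₁ : ψ.comp φ = MonoidHom.id _ := by
    apply SemidirectProduct.hom_ext
    · refine PresentedGroup.ext fun x => ?_
      cases x
      · show ψ (φ (SemidirectProduct.inl (shT p (2 * k + 1) p)))
          = SemidirectProduct.inl (shT p (2 * k + 1) p)
        rw [show φ (SemidirectProduct.inl (shT p (2 * k + 1) p)) = f₁ (shT p (2 * k + 1) p) from
          SemidirectProduct.lift_inl _ _ _ _, hf₁τ, map_mul, map_mul, hψS, hψT,
          ShAux.inr_mul_inl, hθS, mul_assoc, ← map_mul, hu2, map_one, mul_one]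
      · show ψ (φ (SemidirectProduct.inl (shS p (2 * k + 1) p)))
          = SemidirectProduct.inl (shS p (2 * k + 1) p)
        rw [show φ (SemidirectProduct.inl (shS p (2 * k + 1) p)) = f₁ (shS p (2 * k + 1) p) from
          SemidirectProduct.lift_inl _ _ _ _, hf₁σ, hψS]
    · refine MonoidHom.ext fun g => ?_
      rcases hcases g with rfl | rfl
      · simp
      · show ψ (φ (SemidirectProduct.inr (Multiplicative.ofAdd 1)))
          = SemidirectProduct.inr (Multiplicative.ofAdd 1)
        rw [show φ (SemidirectProduct.inr (Multiplicative.ofAdd 1))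
            = f₂ (Multiplicative.ofAdd 1) from SemidirectProduct.lift_inr _ _ _ _, hf₂u, hψT]
  have h₂ : φ.comp ψ = MonoidHom.id _ := by
    refine PresentedGroup.ext fun x => ?_
    cases x
    · show φ (ψ (shT p (2 * (2 * k + 1)) 2)) = shT p (2 * (2 * k + 1)) 2
      rw [hψT]
      rw [show φ (SemidirectProduct.inr (Multiplicative.ofAdd 1))
          = f₂ (Multiplicative.ofAdd 1) from SemidirectProduct.lift_inr _ _ _ _, hf₂u]
    · show φ (ψ (shS p (2 * (2 * k + 1)) 2)) = shS p (2 * (2 * k + 1)) 2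
      rw [hψS]
      rw [show φ (SemidirectProduct.inl (shS p (2 * k + 1) p)) = f₁ (shS p (2 * k + 1) p) from
        SemidirectProduct.lift_inl _ _ _ _, hf₁σ]
  let e := MonoidHom.toMulEquiv φ ψ h₁ h₂
  have heσ : e (SemidirectProduct.inl (shS p (2 * k + 1) p)) = shS p (2 * (2 * k + 1)) 2 := by
    show φ (SemidirectProduct.inl (shS p (2 * k + 1) p)) = _
    rw [show φ (SemidirectProduct.inl (shS p (2 * k + 1) p)) = f₁ (shS p (2 * k + 1) p) from
      SemidirectProduct.lift_inl _ _ _ _, hf₁σ]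
  have heτ : e (SemidirectProduct.inl (shT p (2 * k + 1) p)) = shT p (2 * (2 * k + 1)) 2
      * shS p (2 * (2 * k + 1)) 2 * shT p (2 * (2 * k + 1)) 2 := by
    show φ (SemidirectProduct.inl (shT p (2 * k + 1) p)) = _
    rw [show φ (SemidirectProduct.inl (shT p (2 * k + 1) p)) = f₁ (shT p (2 * k + 1) p) from
      SemidirectProduct.lift_inl _ _ _ _, hf₁τ]
  have heu : e (SemidirectProduct.inr (Multiplicative.ofAdd 1)) = shT p (2 * (2 * k + 1)) 2 := by
    show φ (SemidirectProduct.inr (Multiplicative.ofAdd 1)) = _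
    rw [show φ (SemidirectProduct.inr (Multiplicative.ofAdd 1))
        = f₂ (Multiplicative.ofAdd 1) from SemidirectProduct.lift_inr _ _ _ _, hf₂u]
  -- the subgroup
  have hrange : Set.range (PresentedGroup.of : Bool → Sh p (2 * k + 1) p)
      = {shS p (2 * k + 1) p, shT p (2 * k + 1) p} := by
    ext x
    constructor
    · rintro ⟨b, rfl⟩
      cases b
      · exact Or.inr rfl
      · exact Or.inl rfl
    · rintro (rfl | rfl)
      exacts [⟨true, rfl⟩, ⟨false, rfl⟩]
  have htop : Subgroup.closure {shS p (2 * k + 1) p, shT p (2 * k + 1) p} = ⊤ := by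
    rw [← hrange]; exact PresentedGroup.closure_range_of _
  have hK : Subgroup.closure {shS p (2 * (2 * k + 1)) 2, shT p (2 * (2 * k + 1)) 2
        * shS p (2 * (2 * k + 1)) 2 * shT p (2 * (2 * k + 1)) 2}
      = Subgroup.map (e : _ →* _)
        (SemidirectProduct.inl (φ := ShAux.theta p (2 * k + 1))).range := by
    rw [MonoidHom.range_eq_map, ← htop]
    simp only [MonoidHom.map_closure, Set.image_insert_eq, Set.image_singleton,
      MulEquiv.coe_toMonoidHom]
    rw [show ((e : _ →* _) : _ → _) = ⇑e from rfl, heσ, heτ]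
  have hidx : (Subgroup.closure {shS p (2 * (2 * k + 1)) 2, shT p (2 * (2 * k + 1)) 2
      * shS p (2 * (2 * k + 1)) 2 * shT p (2 * (2 * k + 1)) 2}).index = 2 := by
    rw [hK]
    have hker : (MulEquiv.toMonoidHom e).ker ≤
        (SemidirectProduct.inl (φ := ShAux.theta p (2 * k + 1))).range := by
      rw [(MonoidHom.ker_eq_bot_iff (MulEquiv.toMonoidHom e)).mpr (by exact e.injective)]
      exact bot_le
    have hme : (Subgroup.map (MulEquiv.toMonoidHom e)
          (SemidirectProduct.inl (φ := ShAux.theta p (2 * k + 1))).range).index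
        = (SemidirectProduct.inl (φ := ShAux.theta p (2 * k + 1))).range.index :=
      Subgroup.index_map_eq (f := MulEquiv.toMonoidHom e) _ (by exact e.surjective) hker
    rw [show ((e : _ →* _) : _ →* _) = MulEquiv.toMonoidHom e from rfl] at *
    rw [hme, SemidirectProduct.range_inl_eq_ker_rightHom, Subgroup.index_ker,
      MonoidHom.range_eq_top.mpr SemidirectProduct.rightHom_surjective, Subgroup.card_top,
      Nat.card_eq_fintype_card]
    decide
  refine ⟨⟨ShAux.theta p (2 * k + 1), e, hθS, hθT, heσ, heτ, heu⟩, hidx, ?_⟩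
  exact ⟨(MulEquiv.subgroupCongr hK).trans (((MulEquiv.subgroupMap e _).symm).trans
    (MonoidHom.ofInjective SemidirectProduct.inl_injective).symm)⟩
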